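/- If the value function ν is a bilinear form given by a matrix A = (a_{j,k}) ∈ ℝ^{q×q}, then for every permutation π of (1,…,q) and every j ∈ Q, the paired single-permutation PermutationSHAP estimate is exact: φ̂_j^{(1)} = φ_j = ½ · Σ_{k=1}^q (a_{j,k} + a_{k,j}), where φ_j is the Shapley value of ν. -/

import Mathlib

open Finset

/-- Shapley value of player `j` for value function `ν` on coalitions of `Fin q`. -/
noncomputable def shapley {q : ℕ} (ν : Finset (Fin q) → ℝ) (j : Fin q) : ℝ :=
  ((q : ℝ))⁻¹ * ∑ C ∈ (Finset.univ.erase j).powerset,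
    (((q - 1).choose C.card : ℝ))⁻¹ * (ν (insert j C) - ν C)

/-- The coalition `C_{π,j}` of players preceding `j` in the permutation `π`,
where `π i` is the player at position `i`. -/
def preceding {q : ℕ} (π : Equiv.Perm (Fin q)) (j : Fin q) : Finset (Fin q) :=
  (Finset.univ.filter (fun i : Fin q => i < π.symm j)).image π

/-- The reversed permutation `ρ(π) = (π_q, …, π_1)`. -/
def reversedPerm {q : ℕ} (π : Equiv.Perm (Fin q)) : Equiv.Perm (Fin q) :=
  Fin.revPerm.trans π

/-- Paired single-permutation PermutationSHAP estimate. -/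
noncomputable def pairedEstimate {q : ℕ} (ν : Finset (Fin q) → ℝ)
    (π : Equiv.Perm (Fin q)) (j : Fin q) : ℝ :=
  (1 / 2 : ℝ) * (ν (insert j (preceding π j)) - ν (preceding π j)
    + ν (insert j (preceding (reversedPerm π) j)) - ν (preceding (reversedPerm π) j))

lemma mem_preceding {q : ℕ} (π : Equiv.Perm (Fin q)) (j x : Fin q) :
    x ∈ preceding π j ↔ π.symm x < π.symm j := by
  simp only [preceding, mem_image, mem_filter, mem_univ, true_and]
  constructor
  · rintro ⟨i, hi, rfl⟩; simpa using hi
  · intro h; exact ⟨π.symm x, h, π.apply_symm_apply x⟩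

lemma mem_preceding_rev {q : ℕ} (π : Equiv.Perm (Fin q)) (j x : Fin q) :
    x ∈ preceding (reversedPerm π) j ↔ π.symm j < π.symm x := by
  rw [mem_preceding]
  simp [reversedPerm, Equiv.symm_trans_apply, Fin.revPerm_symm, Fin.rev_lt_rev]

lemma sum_choose_inv {α : Type*} [DecidableEq α] (S : Finset α) :
    ∑ C ∈ S.powerset, ((S.card.choose C.card : ℝ))⁻¹ = S.card + 1 := by
  rw [Finset.sum_powerset,
    Finset.sum_congr rfl (fun r hr => Finset.sum_powersetCard r S (fun c => ((S.card.choose c : ℝ))⁻¹))]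
  rw [Finset.sum_congr rfl (fun r hr => ?_), Finset.sum_const, Finset.card_range,
    nsmul_eq_mul, mul_one]
  · push_cast; ring
  · have h : 0 < S.card.choose r :=
      Nat.choose_pos (Nat.lt_succ_iff.mp (Finset.mem_range.mp hr))
    rw [nsmul_eq_mul, mul_inv_cancel₀ (by exact_mod_cast h.ne')]

lemma sum_choose_inv_mem {α : Type*} [DecidableEq α] (S : Finset α) {k : α} (hk : k ∈ S) :
    ∑ C ∈ S.powerset, (if k ∈ C then ((S.card.choose C.card : ℝ))⁻¹ else 0)
      = (S.card + 1) / 2 := by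
  have hkS : k ∉ S.erase k := Finset.notMem_erase k S
  have hins : insert k (S.erase k) = S := Finset.insert_erase hk
  set m := (S.erase k).card with hm
  have hcard : S.card = m + 1 := by
    rw [hm, Finset.card_erase_of_mem hk]
    have := Finset.card_pos.mpr ⟨k, hk⟩
    omega
  rw [← hins, Finset.sum_powerset_insert hkS, hins]
  have h1 : ∑ C ∈ (S.erase k).powerset, (if k ∈ C then ((S.card.choose C.card : ℝ))⁻¹ else 0) = 0 := by
    refine Finset.sum_eq_zero fun C hC => ?_
    have : k ∉ C := fun h => hkS (Finset.mem_powerset.mp hC h)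
    simp [this]
  rw [h1, zero_add]
  have h2 : ∀ C ∈ (S.erase k).powerset,
      (if k ∈ insert k C then ((S.card.choose (insert k C).card : ℝ))⁻¹ else 0)
        = ((S.card.choose (C.card + 1) : ℝ))⁻¹ := by
    intro C hC
    have hkC : k ∉ C := fun h => hkS (Finset.mem_powerset.mp hC h)
    rw [if_pos (Finset.mem_insert_self k C), Finset.card_insert_of_notMem hkC]
  rw [Finset.sum_congr rfl h2, Finset.sum_powerset,
    Finset.sum_congr rfl (fun r hr =>
      Finset.sum_powersetCard r (S.erase k) (fun c => ((S.card.choose (c + 1) : ℝ))⁻¹)), ← hm]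
  have h3 : ∀ r ∈ Finset.range (m + 1),
      (m.choose r) • ((S.card.choose (r + 1) : ℝ))⁻¹ = (r + 1) / (m + 1) := by
    intro r hr
    have hrm : r ≤ m := Nat.lt_succ_iff.mp (Finset.mem_range.mp hr)
    have key : (m + 1) * m.choose r = (m + 1).choose (r + 1) * (r + 1) :=
      Nat.add_one_mul_choose_eq m r
    have hpos : 0 < (m + 1).choose (r + 1) := Nat.choose_pos (by omega)
    rw [hcard, nsmul_eq_mul]
    have hkey : ((m : ℝ) + 1) * (m.choose r) = ((m + 1).choose (r + 1)) * (r + 1) := by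
      exact_mod_cast key
    field_simp
    nlinarith [hkey]
  rw [Finset.sum_congr rfl h3, hcard]
  have : ∑ r ∈ Finset.range (m + 1), ((r : ℝ) + 1) / (m + 1)
      = (∑ r ∈ Finset.range (m + 1), ((r : ℝ) + 1)) / (m + 1) := by
    rw [Finset.sum_div]
  rw [this]
  have hsum : ∑ r ∈ Finset.range (m + 1), ((r : ℝ) + 1) = (m + 1) * (m + 2) / 2 := by
    induction m with
    | zero => norm_num
    | succ n ih =>
      rw [Finset.sum_range_succ, ih]
      push_cast; ring
  rw [hsum]
  have hm1 : (m : ℝ) + 1 ≠ 0 := by positivity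
  field_simp
  push_cast
  ring

lemma gain {q : ℕ} (A : Fin q → Fin q → ℝ) (ν : Finset (Fin q) → ℝ)
    (hν : ∀ C : Finset (Fin q), ν C = ∑ j ∈ C, ∑ k ∈ C, A j k)
    {j : Fin q} {C : Finset (Fin q)} (hj : j ∉ C) :
    ν (insert j C) - ν C = A j j + ∑ k ∈ C, (A j k + A k j) := by
  rw [hν, hν]
  simp only [Finset.sum_insert hj]
  rw [Finset.sum_add_distrib, Finset.sum_add_distrib]
  ring

/-- for a bilinear value function the paired single-permutation
PermutationSHAP estimate is exact for every permutation. -/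
theorem paired_permutationSHAP_exact_bilinear (q : ℕ) (hq : 1 ≤ q)
    (A : Fin q → Fin q → ℝ) (ν : Finset (Fin q) → ℝ)
    (hν : ∀ C : Finset (Fin q), ν C = ∑ j ∈ C, ∑ k ∈ C, A j k)
    (π : Equiv.Perm (Fin q)) (j : Fin q) :
    pairedEstimate ν π j = shapley ν j ∧
      shapley ν j = (1 / 2 : ℝ) * ∑ k, (A j k + A k j) := by
  set S : Finset (Fin q) := Finset.univ.erase j with hS
  have hcard : S.card = q - 1 := by
    rw [hS, Finset.card_erase_of_mem (Finset.mem_univ j), Finset.card_univ, Fintype.card_fin]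
  have hqR : (q : ℝ) ≠ 0 := by positivity
  have hsum_univ : ∑ k, (A j k + A k j) = (A j j + A j j) + ∑ k ∈ S, (A j k + A k j) :=
    (Finset.add_sum_erase Finset.univ (fun k => A j k + A k j) (Finset.mem_univ j)).symm
  -- the Shapley value
  have hshap : shapley ν j = (1 / 2 : ℝ) * ∑ k, (A j k + A k j) := by
    unfold shapley
    rw [← hS]
    have step1 : ∀ C ∈ S.powerset,
        (((q - 1).choose C.card : ℝ))⁻¹ * (ν (insert j C) - ν C)
        = ((S.card.choose C.card : ℝ))⁻¹ * A j j
          + ∑ k ∈ S, (if k ∈ C then ((S.card.choose C.card : ℝ))⁻¹ else 0) * (A j k + A k j) := by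
      intro C hC
      have hjC : j ∉ C := fun h => (Finset.notMem_erase j Finset.univ) (Finset.mem_powerset.mp hC h)
      rw [gain A ν hν hjC, hcard, mul_add]
      congr 1
      rw [Finset.mul_sum]
      rw [show (∑ k ∈ C, ((((q-1).choose C.card : ℝ))⁻¹ * (A j k + A k j)))
          = ∑ k ∈ S, (if k ∈ C then (((q-1).choose C.card : ℝ))⁻¹ * (A j k + A k j) else 0) from ?_]
      · exact Finset.sum_congr rfl fun k hk => by split <;> simp [*]
      · rw [Finset.sum_ite_mem, Finset.inter_eq_right.mpr (Finset.mem_powerset.mp hC)]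
    rw [Finset.sum_congr rfl step1, Finset.sum_add_distrib, ← Finset.sum_mul, sum_choose_inv,
      Finset.sum_comm]
    have step2 : ∀ k ∈ S,
        ∑ C ∈ S.powerset, (if k ∈ C then ((S.card.choose C.card : ℝ))⁻¹ else 0) * (A j k + A k j)
        = ((S.card + 1 : ℝ) / 2) * (A j k + A k j) := by
      intro k hk
      rw [← Finset.sum_mul, sum_choose_inv_mem S hk]
    rw [Finset.sum_congr rfl step2, ← Finset.mul_sum]
    have hScast : (S.card : ℝ) + 1 = q := by
      rw [hcard]
      have : ((q - 1 : ℕ) : ℝ) = (q : ℝ) - 1 := by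
        push_cast [Nat.cast_sub hq]; ring
      rw [this]; ring
    rw [hScast, hsum_univ]
    field_simp
    ring
  refine ⟨?_, hshap⟩
  -- the paired estimate
  rw [hshap]
  set C₁ := preceding π j with hC₁
  set C₂ := preceding (reversedPerm π) j with hC₂
  have hj1 : j ∉ C₁ := by rw [hC₁, mem_preceding]; exact lt_irrefl _
  have hj2 : j ∉ C₂ := by rw [hC₂, mem_preceding_rev]; exact lt_irrefl _
  have hdisj : Disjoint C₁ C₂ := by
    rw [Finset.disjoint_left]
    intro x h1 h2
    rw [hC₁, mem_preceding] at h1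
    rw [hC₂, mem_preceding_rev] at h2
    exact absurd h1 (not_lt.mpr h2.le)
  have hunion : C₁ ∪ C₂ = S := by
    ext x
    rw [Finset.mem_union, hC₁, mem_preceding, hC₂, mem_preceding_rev, hS, Finset.mem_erase]
    constructor
    · rintro (h | h)
      · exact ⟨fun hx => by subst hx; exact lt_irrefl _ h, Finset.mem_univ x⟩
      · exact ⟨fun hx => by subst hx; exact lt_irrefl _ h, Finset.mem_univ x⟩
    · rintro ⟨hx, -⟩
      have : π.symm x ≠ π.symm j := fun h => hx (π.symm.injective h)
      exact this.lt_or_gt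
  have hsplit : ∑ k ∈ C₁, (A j k + A k j) + ∑ k ∈ C₂, (A j k + A k j) = ∑ k ∈ S, (A j k + A k j) := by
    rw [← Finset.sum_union hdisj, hunion]
  unfold pairedEstimate
  rw [← hC₁, ← hC₂, gain A ν hν hj1]
  have : ν (insert j C₂) - ν C₂ = A j j + ∑ k ∈ C₂, (A j k + A k j) := gain A ν hν hj2
  linarith [this, hsplit, hsum_univ]
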